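/- The only pair of coprime integers (x, y) with x ≠ 0 and nonnegative integer k satisfying x^2 + 7^{2k+1} = y^4 is (|x|, |y|, k) = (3, 2, 0). -/

import Mathlib

/-- Orbit of `(1,1)` mod `287 = 7·41` under the Pell recurrence for `8u² - 7v² = 1`. -/
def inOrbit (u v : ℕ) : Prop :=
  (u % 287 = 1 ∧ v % 287 = 1) ∨ (u % 287 = 29 ∧ v % 287 = 31) ∨
  (u % 287 = 8 ∧ v % 287 = 68) ∨ (u % 287 = 211 ∧ v % 287 = 0) ∨
  (u % 287 = 8 ∧ v % 287 = 219) ∨ (u % 287 = 29 ∧ v % 287 = 256) ∨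
  (u % 287 = 1 ∧ v % 287 = 286)

set_option maxHeartbeats 1000000 in
lemma orbit_step {u v : ℕ} (h : inOrbit u v) : inOrbit (15*u+14*v) (16*u+15*v) := by
  unfold inOrbit at h ⊢
  rcases h with ⟨h1,h2⟩|⟨h1,h2⟩|⟨h1,h2⟩|⟨h1,h2⟩|⟨h1,h2⟩|⟨h1,h2⟩|⟨h1,h2⟩
  · right; left; omega
  · right; right; left; omega
  · right; right; right; left; omega
  · right; right; right; right; left; omega
  · right; right; right; right; right; left; omega
  · right; right; right; right; right; right; omega
  · left; omega

lemma no_small (v u : ℕ) (hv2 : 2 ≤ v) (hv30 : v ≤ 30) (hu : u ≤ 28) :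
    8*u^2 ≠ 7*v^2+1 := by
  interval_cases v <;> interval_cases u <;> omega

lemma pell : ∀ v : ℕ, ∀ u : ℕ, 8*u^2 = 7*v^2+1 → inOrbit u v := by
  intro v
  induction v using Nat.strong_induction_on with
  | _ v ih =>
    intro u h
    rcases Nat.lt_or_ge v 31 with hv | hv
    · -- small cases: v ≤ 30
      rcases Nat.lt_or_ge v 2 with hv1 | hv2
      · interval_cases v
        · omega
        · -- v = 1 : 8u² = 8
          have hu : u = 1 := by nlinarith
          subst hu
          left; exact ⟨rfl, rfl⟩
      · exfalso
        have hu : u ≤ 28 := by nlinarith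
        exact no_small v u hv2 (by omega) hu h
    · -- v ≥ 31 : descend
      have h1 : 14*v ≤ 15*u := by nlinarith
      have h2 : 16*u < 15*v := by nlinarith
      have h3 : 14*v < 16*u := by nlinarith
      set u' := 15*u - 14*v with hu'
      set v' := 15*v - 16*u with hv'
      have e1 : u' + 14*v = 15*u := by omega
      have e2 : v' + 16*u = 15*v := by omega
      have hlt : v' < v := by omega
      have heq' : 8*u'^2 = 7*v'^2+1 := by
        have hc : (8:ℤ)*(u':ℤ)^2 = 7*(v':ℤ)^2+1 := by
          have c1 : (u':ℤ) = 15*(u:ℤ) - 14*(v:ℤ) := by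
            push_cast [hu', h1]; omega
          have c2 : (v':ℤ) = 15*(v:ℤ) - 16*(u:ℤ) := by
            push_cast [hv', h2.le]; omega
          have hz : (8:ℤ)*(u:ℤ)^2 = 7*(v:ℤ)^2+1 := by exact_mod_cast h
          rw [c1, c2]; linarith [hz, sq_nonneg ((u:ℤ) - (v:ℤ))]
        exact_mod_cast hc
      have hmem := ih v' hlt u' heq'
      have hu2 : u = 15*u' + 14*v' := by omega
      have hv2 : v = 16*u' + 15*v' := by omega
      rw [hu2, hv2]
      exact orbit_step hmem

lemma orbit_41 {u v : ℕ} (h : inOrbit u v) (h7 : 7 ∣ v) : 41 ∣ v := by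
  unfold inOrbit at h; omega

set_option maxHeartbeats 1000000 in
/-- The only pair of coprime integers `(x, y)` with `x ≠ 0` and `k ≥ 0` satisfying
`x^2 + 7^(2k+1) = y^4` is `(|x|, |y|, k) = (3, 2, 0)`. -/
theorem stmt_4 (x y : ℤ) (k : ℕ) (hcop : IsCoprime x y) (hx : x ≠ 0)
    (heq : x ^ 2 + 7 ^ (2 * k + 1) = y ^ 4) :
    x.natAbs = 3 ∧ y.natAbs = 2 ∧ k = 0 := by
  set A := y^2 - x with hA
  set B := y^2 + x with hB
  have key : A * B = 7^(2*k+1) := by rw [hA, hB]; linear_combination -heq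
  have h7pos : (0:ℤ) < 7^(2*k+1) := by positivity
  have hx2 : (1:ℤ) ≤ x^2 := by
    have h0 : x^2 ≠ 0 := pow_ne_zero 2 hx
    have h1 : (0:ℤ) ≤ x^2 := sq_nonneg x
    omega
  have hy4 : (0:ℤ) < y^4 := by nlinarith
  have hysq : (0:ℤ) < y^2 := by nlinarith [sq_nonneg (y^2)]
  have hApos : 0 < A := by
    by_contra hc
    push_neg at hc
    have hA0 : A ≠ 0 := by
      intro h0; rw [h0, zero_mul] at key; exact h7pos.ne' key.symm
    have hBneg : B < 0 := by
      rcases lt_or_ge B 0 with h | h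
      · exact h
      · nlinarith
    nlinarith
  have hBpos : 0 < B := by nlinarith
  have hsum : A + B = 2*y^2 := by rw [hA, hB]; ring
  have hdiff : B - A = 2*x := by rw [hA, hB]; ring
  have hp7 : Prime (7:ℤ) := by norm_num
  have hgcd : Int.gcd A B = 1 := by
    by_contra hg
    obtain ⟨p, hp, hpg⟩ := Nat.exists_prime_and_dvd hg
    have hpA : (p:ℤ) ∣ A := (Int.natCast_dvd_natCast.2 hpg).trans (Int.gcd_dvd_left A B)
    have hpB : (p:ℤ) ∣ B := (Int.natCast_dvd_natCast.2 hpg).trans (Int.gcd_dvd_right A B)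
    have hp7n : (p:ℤ) ∣ 7^(2*k+1) := key ▸ hpA.mul_right B
    have hpprime : Prime (p:ℤ) := Nat.prime_iff_prime_int.mp hp
    have hp7' : (p:ℤ) ∣ 7 := hpprime.dvd_of_dvd_pow hp7n
    have hp7'' : p = 7 := by
      have hd : p ∣ 7 := by exact_mod_cast hp7'
      exact (Nat.prime_dvd_prime_iff_eq hp (by norm_num)).1 hd
    subst hp7''
    have h7y : (7:ℤ) ∣ y := by
      have h1 : (7:ℤ) ∣ 2*y^2 := hsum ▸ hpA.add hpB
      rcases hp7.dvd_mul.1 h1 with h | h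
      · norm_num at h
      · exact hp7.dvd_of_dvd_pow h
    have h7x : (7:ℤ) ∣ x := by
      have h1 : (7:ℤ) ∣ 2*x := hdiff ▸ dvd_sub hpB hpA
      rcases hp7.dvd_mul.1 h1 with h | h
      · norm_num at h
      · exact h
    obtain ⟨s, t, hst⟩ := hcop
    have : (7:ℤ) ∣ 1 := hst ▸ dvd_add (h7x.mul_left s) (h7y.mul_left t)
    norm_num at this
  set a := A.natAbs with ha
  set b := B.natAbs with hb
  have hab : a * b = 7^(2*k+1) := by
    have := congrArg Int.natAbs key
    rwa [Int.natAbs_mul, show ((7:ℤ)^(2*k+1)).natAbs = 7^(2*k+1) from by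
      rw [Int.natAbs_pow]; rfl] at this
  have hadvd : a ∣ 7^(2*k+1) := ⟨b, hab.symm⟩
  have hbdvd : b ∣ 7^(2*k+1) := ⟨a, by rw [← hab]; ring⟩
  obtain ⟨i, hi, hai⟩ := (Nat.dvd_prime_pow (by norm_num)).1 hadvd
  obtain ⟨j, hj, hbj⟩ := (Nat.dvd_prime_pow (by norm_num)).1 hbdvd
  have hone : a = 1 ∨ b = 1 := by
    by_contra hc
    push_neg at hc
    have hi1 : 1 ≤ i := by
      rcases Nat.eq_zero_or_pos i with h | h
      · subst h; rw [pow_zero] at hai; exact absurd hai hc.1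
      · exact h
    have hj1 : 1 ≤ j := by
      rcases Nat.eq_zero_or_pos j with h | h
      · subst h; rw [pow_zero] at hbj; exact absurd hbj hc.2
      · exact h
    have h7a : 7 ∣ a := hai ▸ dvd_pow_self 7 (by omega)
    have h7b : 7 ∣ b := hbj ▸ dvd_pow_self 7 (by omega)
    have : 7 ∣ Nat.gcd a b := Nat.dvd_gcd h7a h7b
    rw [show Nat.gcd a b = Int.gcd A B from rfl, hgcd] at this
    omega
  have hAcast : (a:ℤ) = A := Int.natAbs_of_nonneg hApos.le
  have hBcast : (b:ℤ) = B := Int.natAbs_of_nonneg hBpos.le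
  have h2y : 2*y^2 = 1 + 7^(2*k+1) := by
    rcases hone with h1 | h1
    · have hb7 : (b:ℤ) = 7^(2*k+1) := by
        have h2 := hab
        rw [h1, one_mul] at h2; exact_mod_cast h2
      have hA1 : A = 1 := by rw [← hAcast, h1]; norm_num
      have hB7 : B = 7^(2*k+1) := by rw [← hBcast]; exact hb7
      linarith
    · have ha7 : (a:ℤ) = 7^(2*k+1) := by
        have h2 := hab
        rw [h1, mul_one] at h2; exact_mod_cast h2
      have hB1 : B = 1 := by rw [← hBcast, h1]; norm_num
      have hA7 : A = 7^(2*k+1) := by rw [← hAcast]; exact ha7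
      linarith
  set m := y.natAbs with hm
  have hmsq : ((m:ℤ))^2 = y^2 := by rw [hm]; push_cast; exact sq_abs y
  have h2m : 2*m^2 = 1 + 7^(2*k+1) := by
    have hc : (2:ℤ)*(m:ℤ)^2 = 1 + 7^(2*k+1) := by rw [hmsq]; exact h2y
    exact_mod_cast hc
  have h49 : (49:ℕ)^k % 16 = 1 := by
    rw [Nat.pow_mod]; norm_num
  have h7n : (7:ℕ)^(2*k+1) = 7 * 49^k := by
    rw [pow_succ, two_mul, pow_add, ← mul_pow]; norm_num [mul_comm]
  have hmod : 2*m^2 % 16 = 8 := by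
    obtain ⟨t, ht⟩ : ∃ t, (49:ℕ)^k = 16*t + 1 := ⟨49^k / 16, by omega⟩
    rw [h2m, h7n, ht]; omega
  have hmeven : m % 2 = 0 := by
    by_contra hodd
    obtain ⟨s, hs⟩ : ∃ s, m = 2*s+1 := ⟨m/2, by omega⟩
    obtain ⟨w, hw⟩ := Nat.even_mul_succ_self s
    have : 2*m^2 = 16*w + 2 := by rw [hs]; nlinarith [hw]
    omega
  obtain ⟨z, hz⟩ : ∃ z, m = 2*z := ⟨m/2, by omega⟩
  have hpell : 8*z^2 = 7*(7^k)^2 + 1 := by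
    have h7n2 : (7:ℕ)^(2*k+1) = 7*(7^k)^2 := by rw [pow_succ, two_mul, pow_add]; ring
    rw [hz, h7n2] at h2m; nlinarith [h2m]
  have horb := pell (7^k) z hpell
  have hk0 : k = 0 := by
    by_contra hk
    have h7v : 7 ∣ 7^k := dvd_pow_self 7 hk
    have h41 : (41:ℕ) ∣ 7^k := orbit_41 horb h7v
    have := Nat.Prime.dvd_of_dvd_pow (p := 41) (by norm_num) h41
    omega
  have hm2 : m = 2 := by
    rw [hk0] at h2m
    norm_num at h2m
    nlinarith
  have hy2 : y^2 = 4 := by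
    rw [← hmsq, hm2]; norm_num
  refine ⟨?_, hm2, hk0⟩
  rcases hone with h1 | h1
  · have hA1 : A = 1 := by rw [← hAcast, h1]; norm_num
    have hx3 : x = 3 := by rw [hA] at hA1; linarith [hy2]
    rw [hx3]; rfl
  · have hB1 : B = 1 := by rw [← hBcast, h1]; norm_num
    have hx3 : x = -3 := by rw [hB] at hB1; linarith [hy2]
    rw [hx3]; rfl
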